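/- If G has at least one edge, then min{ n^{1 − 1/s}, n^{s − 1/s} / μ^{1 − 1/s} } ≥ 2m · μ_{2s−1} / μ^2, where μ_{2s−1} = ∑_{v∈V} d_v^{2s−1}. -/

import Mathlib

open Finset

/-- If `G` has at least one edge, then
`min{ n^{1 − 1/s}, n^{s − 1/s} / μ^{1 − 1/s} } ≥ 2m·μ_{2s−1}/μ^2`, where
`μ = ∑_{v ∈ V} d_v^s` and `μ_{2s−1} = ∑_{v ∈ V} d_v^{2s−1}`. -/
theorem min_ge_edge_moment_ratio {V : Type*} [Fintype V] [DecidableEq V]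
    (G : SimpleGraph V) [DecidableRel G.Adj]
    (s : ℕ) (hs : 1 ≤ s)
    (hm : G.edgeFinset.Nonempty)
    (μ : ℝ) (hμ : μ = ∑ v : V, (G.degree v : ℝ) ^ s)
    (μ' : ℝ) (hμ' : μ' = ∑ v : V, (G.degree v : ℝ) ^ (2 * s - 1)) :
    min ((Fintype.card V : ℝ) ^ ((1 : ℝ) - 1 / (s : ℝ)))
        ((Fintype.card V : ℝ) ^ ((s : ℝ) - 1 / (s : ℝ)) / μ ^ ((1 : ℝ) - 1 / (s : ℝ)))
      ≥ 2 * (G.edgeFinset.card : ℝ) * μ' / μ ^ 2 := by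
  obtain ⟨t, rfl⟩ : ∃ t, s = t + 1 := ⟨s - 1, by omega⟩
  -- an adjacent pair
  have hadj : ∃ a b, G.Adj a b := by
    obtain ⟨e, he⟩ := hm
    induction e with
    | _ a b => exact ⟨a, b, by simpa using he⟩
  obtain ⟨a, b, hab⟩ := hadj
  have hV : Nonempty V := ⟨a⟩
  set N : ℝ := (Fintype.card V : ℝ) with hN
  have hN1 : (1 : ℝ) ≤ N := by
    rw [hN]; exact_mod_cast Fintype.card_pos (α := V)
  have hN0 : (0 : ℝ) ≤ N := le_trans zero_le_one hN1
  have hdnn : ∀ v : V, (0:ℝ) ≤ (G.degree v : ℝ) := fun v => Nat.cast_nonneg _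
  have hdle : ∀ v : V, (G.degree v : ℝ) ≤ N := fun v => by
    rw [hN]; exact_mod_cast (G.degree_lt_card_verts v).le
  -- μ > 0
  have hda : 0 < G.degree a := by
    rw [G.degree_pos_iff_exists_adj]; exact ⟨b, hab⟩
  have hμpos : 0 < μ := by
    rw [hμ]
    apply Finset.sum_pos' (fun v _ => by positivity)
    exact ⟨a, Finset.mem_univ a, by positivity⟩
  have hμ'nn : 0 ≤ μ' := by
    rw [hμ']; exact Finset.sum_nonneg fun v _ => by positivity
  set M : ℝ := (G.edgeFinset.card : ℝ) with hM
  have hMnn : (0:ℝ) ≤ 2 * M := by positivity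
  -- handshake
  have hsum : ∑ v : V, (G.degree v : ℝ) = 2 * M := by
    rw [hM]
    exact_mod_cast congrArg (Nat.cast : ℕ → ℝ) G.sum_degrees_eq_twice_card_edges
  have hsnn : (0:ℝ) ≤ ∑ v : V, (G.degree v : ℝ) :=
    Finset.sum_nonneg fun v _ => hdnn v
  -- H1 : (2M)^(t+1) ≤ N^t * μ
  have H1 : (2 * M) ^ (t + 1) ≤ N ^ t * μ := by
    have := pow_sum_div_card_le_sum_pow (s := Finset.univ)
      (f := fun v : V => (G.degree v : ℝ)) (fun v _ => hdnn v) t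
    rw [div_le_iff₀ (by positivity)] at this
    calc (2 * M) ^ (t+1) = (∑ v : V, (G.degree v : ℝ)) ^ (t+1) := by rw [hsum]
      _ ≤ (∑ v : V, (G.degree v : ℝ) ^ (t+1)) * (Finset.univ.card : ℝ) ^ t := this
      _ = N ^ t * μ := by
          rw [hμ, Finset.card_univ, mul_comm]
  -- each term ≤ sum
  have hterm : ∀ v : V, (G.degree v : ℝ) ^ (t+1) ≤ μ := fun v => by
    rw [hμ]
    exact Finset.single_le_sum (f := fun w : V => (G.degree w : ℝ) ^ (t+1))
      (fun w _ => by positivity) (Finset.mem_univ v)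
  -- C trick for H2
  set C : ℝ := μ ^ ((t : ℝ) / ((t:ℝ) + 1)) with hC
  have hCnn : 0 ≤ C := Real.rpow_nonneg hμpos.le _
  have hCpow : C ^ (t + 1) = μ ^ t := by
    rw [hC, ← Real.rpow_natCast (μ ^ _) (t+1), ← Real.rpow_mul hμpos.le]
    rw [show (t : ℝ) / ((t:ℝ) + 1) * ((t+1 : ℕ) : ℝ) = (t:ℝ) by
      push_cast; field_simp]
    rw [Real.rpow_natCast]
  have hdC : ∀ v : V, (G.degree v : ℝ) ^ t ≤ C := fun v => by
    apply le_of_pow_le_pow_left₀ (n := t + 1) (by omega) hCnn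
    calc ((G.degree v : ℝ) ^ t) ^ (t+1) = ((G.degree v : ℝ) ^ (t+1)) ^ t := by ring
      _ ≤ μ ^ t := pow_le_pow_left₀ (by positivity) (hterm v) t
      _ = C ^ (t+1) := hCpow.symm
  have hμ'C : μ' ≤ C * μ := by
    rw [hμ', hμ, Finset.mul_sum]
    apply Finset.sum_le_sum
    intro v _
    have : (G.degree v : ℝ) ^ (2 * (t+1) - 1) = (G.degree v : ℝ) ^ t * (G.degree v : ℝ) ^ (t+1) := by
      rw [← pow_add]; congr 1; omega
    rw [this]
    exact mul_le_mul_of_nonneg_right (hdC v) (by positivity)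
  have H2 : μ' ^ (t + 1) ≤ μ ^ (2 * t + 1) := by
    calc μ' ^ (t+1) ≤ (C * μ) ^ (t+1) := pow_le_pow_left₀ hμ'nn hμ'C _
      _ = C ^ (t+1) * μ ^ (t+1) := mul_pow _ _ _
      _ = μ ^ t * μ ^ (t+1) := by rw [hCpow]
      _ = μ ^ (2*t+1) := by rw [← pow_add]; congr 1; omega
  -- H3 : μ' ≤ N^t * μ
  have H3 : μ' ≤ N ^ t * μ := by
    rw [hμ', hμ, Finset.mul_sum]
    apply Finset.sum_le_sum
    intro v _
    have h1 : (G.degree v : ℝ) ^ (2 * (t+1) - 1) = (G.degree v : ℝ) ^ t * (G.degree v : ℝ) ^ (t+1) := by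
      rw [← pow_add]; congr 1; omega
    rw [h1]
    exact mul_le_mul_of_nonneg_right (pow_le_pow_left₀ (hdnn v) (hdle v) t) (by positivity)
  -- rpow identities
  have hts : ((t + 1 : ℕ) : ℝ) ≠ 0 := by positivity
  have ha1 : (N ^ ((1:ℝ) - 1 / ((t+1 : ℕ) : ℝ))) ^ (t+1) = N ^ t := by
    rw [← Real.rpow_natCast (N ^ _) (t+1), ← Real.rpow_mul hN0]
    rw [show ((1:ℝ) - 1 / ((t+1 : ℕ) : ℝ)) * ((t+1 : ℕ) : ℝ) = ((t:ℕ):ℝ) by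
      push_cast; field_simp; ring]
    rw [Real.rpow_natCast]
  have ha2 : (N ^ (((t+1 : ℕ) : ℝ) - 1 / ((t+1 : ℕ) : ℝ))) ^ (t+1) = N ^ (t*(t+2)) := by
    rw [← Real.rpow_natCast (N ^ _) (t+1), ← Real.rpow_mul hN0]
    rw [show ((((t+1 : ℕ) : ℝ)) - 1 / ((t+1 : ℕ) : ℝ)) * ((t+1 : ℕ) : ℝ) = ((t*(t+2):ℕ):ℝ) by
      push_cast; field_simp; ring]
    rw [Real.rpow_natCast]
  have hμa : (μ ^ ((1:ℝ) - 1 / ((t+1 : ℕ) : ℝ))) ^ (t+1) = μ ^ t := by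
    rw [← Real.rpow_natCast (μ ^ _) (t+1), ← Real.rpow_mul hμpos.le]
    rw [show ((1:ℝ) - 1 / ((t+1 : ℕ) : ℝ)) * ((t+1 : ℕ) : ℝ) = ((t:ℕ):ℝ) by
      push_cast; field_simp; ring]
    rw [Real.rpow_natCast]
  rw [ge_iff_le, le_min_iff]
  constructor
  · rw [div_le_iff₀ (by positivity)]
    apply le_of_pow_le_pow_left₀ (n := t+1) (by omega) (by positivity)
    calc (2 * M * μ') ^ (t+1) = (2*M)^(t+1) * μ'^(t+1) := mul_pow _ _ _
      _ ≤ (N ^ t * μ) * μ ^ (2*t+1) :=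
          mul_le_mul H1 H2 (by positivity) (by positivity)
      _ = N ^ t * (μ^2) ^ (t+1) := by ring
      _ = (N ^ ((1:ℝ) - 1 / ((t+1 : ℕ) : ℝ))) ^ (t+1) * (μ^2) ^ (t+1) := by rw [ha1]
      _ = (N ^ ((1:ℝ) - 1 / ((t+1 : ℕ) : ℝ)) * μ^2) ^ (t+1) := (mul_pow _ _ _).symm
  · rw [div_le_div_iff₀ (by positivity) (Real.rpow_pos_of_pos hμpos _)]
    apply le_of_pow_le_pow_left₀ (n := t+1) (by omega) (by positivity)
    have hμ'pow : μ' ^ (t+1) ≤ (N ^ t * μ) ^ (t+1) := pow_le_pow_left₀ hμ'nn H3 _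
    calc (2 * M * μ' * μ ^ ((1:ℝ) - 1 / ((t+1 : ℕ) : ℝ))) ^ (t+1)
        = (2*M)^(t+1) * μ'^(t+1) * (μ ^ ((1:ℝ) - 1 / ((t+1 : ℕ) : ℝ)))^(t+1) := by ring
      _ = (2*M)^(t+1) * μ'^(t+1) * μ ^ t := by rw [hμa]
      _ ≤ (N ^ t * μ) * ((N ^ t * μ) ^ (t+1)) * μ ^ t := by
          apply mul_le_mul_of_nonneg_right _ (by positivity)
          exact mul_le_mul H1 hμ'pow (by positivity) (by positivity)
      _ = N ^ (t*(t+2)) * (μ^2) ^ (t+1) := by ring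
      _ = (N ^ (((t+1 : ℕ) : ℝ) - 1 / ((t+1 : ℕ) : ℝ)))^(t+1) * (μ^2) ^ (t+1) := by rw [ha2]
      _ = (N ^ (((t+1 : ℕ) : ℝ) - 1 / ((t+1 : ℕ) : ℝ)) * μ^2) ^ (t+1) := (mul_pow _ _ _).symm
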